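/- Let q : K² × K² → K^m be a symmetric bilinear map (the second fundamental form of a surface at a point), viewed as an m-dimensional linear system of quadrics on P¹. If the linear system has projective dimension 1 (a pencil of binary quadratic forms with no common factor in general position), then there exists exactly one unordered pair of conjugate points on P¹, i.e. exactly one pair {[v],[w]} (possibly [v]=[w]) with q(v,w)=0. -/

import Mathlib

open Matrix

lemma vne2 {K : Type*} [Field K] {f : Fin 2 → K} (h : f ≠ 0) : f 0 ≠ 0 ∨ f 1 ≠ 0 := by
  by_contra hc
  push_neg at hc
  exact h (funext fun i => by fin_cases i <;> simp [hc.1, hc.2])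

lemma aux_cross_zero {K : Type*} [Field K] {a b w : Fin 2 → K} (hw : w ≠ 0)
    (ha : a 0 * w 0 + a 1 * w 1 = 0) (hb : b 0 * w 0 + b 1 * w 1 = 0) :
    a 0 * b 1 - a 1 * b 0 = 0 := by
  rcases vne2 hw with h0 | h1
  · have h : (a 0 * b 1 - a 1 * b 0) * w 0 = 0 := by linear_combination b 1 * ha - a 1 * hb
    exact (mul_eq_zero.mp h).resolve_right h0
  · have h : (a 0 * b 1 - a 1 * b 0) * w 1 = 0 := by linear_combination (- b 0) * ha + a 0 * hb
    exact (mul_eq_zero.mp h).resolve_right h1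

lemma aux_prop {K : Type*} [Field K] {x v : Fin 2 → K} (hx : x ≠ 0) (hv : v ≠ 0)
    (hc : x 0 * v 1 - x 1 * v 0 = 0) : ∃ a : K, a ≠ 0 ∧ v = a • x := by
  rcases vne2 hx with h0 | h1
  · refine ⟨v 0 / x 0, ?_, ?_⟩
    · intro ha
      have hv0 : v 0 = 0 := by
        rcases div_eq_zero_iff.mp ha with h | h
        · exact h
        · exact absurd h h0
      have hv1 : v 1 = 0 := by
        have h' : x 0 * v 1 = 0 := by linear_combination hc + x 1 * hv0
        exact (mul_eq_zero.mp h').resolve_left h0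
      exact hv (funext fun i => by fin_cases i <;> simp [hv0, hv1])
    · funext i
      fin_cases i <;> simp [Pi.smul_apply] <;> field_simp
      linear_combination hc
  · refine ⟨v 1 / x 1, ?_, ?_⟩
    · intro ha
      have hv1 : v 1 = 0 := by
        rcases div_eq_zero_iff.mp ha with h | h
        · exact h
        · exact absurd h h1
      have hv0 : v 0 = 0 := by
        have h' : x 1 * v 0 = 0 := by linear_combination -hc + x 0 * hv1
        exact (mul_eq_zero.mp h').resolve_left h1
      exact hv (funext fun i => by fin_cases i <;> simp [hv0, hv1])
    · funext i
      fin_cases i <;> simp [Pi.smul_apply] <;> field_simp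
      linear_combination -hc

lemma factor_quad {K : Type*} [Field K] [IsAlgClosed K] [CharZero K] (A B C : K)
    (h : ¬(A = 0 ∧ B = 0 ∧ C = 0)) :
    ∃ p q r s c : K, ¬(p = 0 ∧ q = 0) ∧ ¬(r = 0 ∧ s = 0) ∧ c ≠ 0 ∧
      ∀ x y : K, A * x ^ 2 + B * x * y + C * y ^ 2 = c * (q * x - p * y) * (s * x - r * y) := by
  by_cases hA : A = 0
  · refine ⟨-1, 0, -C, B, 1, by simp, ?_, one_ne_zero, ?_⟩
    · rintro ⟨hr, hs⟩
      exact h ⟨hA, hs, neg_eq_zero.mp hr⟩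
    · intro x y; subst hA; ring
  · obtain ⟨δ, hδ⟩ := IsAlgClosed.exists_pow_nat_eq (B ^ 2 - 4 * A * C) (n := 2) two_pos
    refine ⟨(-B + δ) / (2 * A), 1, (-B - δ) / (2 * A), 1, A, by simp, by simp, hA, ?_⟩
    intro x y
    have h2 : (2 : K) ≠ 0 := two_ne_zero
    field_simp
    ring_nf
    linear_combination y ^ 2 * hδ


/-- A pencil of binary quadratic forms (two linearly independent symmetric
bilinear forms `q₁, q₂` on `K²`, encoded by symmetric matrices `Q₁, Q₂`) in general
position (the conjugacy determinant `D(v) = q₁(v,e₁)q₂(v,e₂) − q₁(v,e₂)q₂(v,e₁)` does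
not vanish identically) admits exactly one unordered pair of conjugate points on `P¹`:
there exist nonzero `v, w` with `q₁(v,w) = q₂(v,w) = 0` (possibly `[v] = [w]`, the
asymptotic case), and any other conjugate pair agrees with `{[v],[w]}`. -/
theorem stmt8 {K : Type*} [Field K] [IsAlgClosed K] [CharZero K]
    (Q₁ Q₂ : Matrix (Fin 2) (Fin 2) K) (h₁ : Q₁.IsSymm) (h₂ : Q₂.IsSymm)
    (hind : LinearIndependent K ![Q₁, Q₂])
    (hD : ∃ v : Fin 2 → K,
      (v ᵥ* Q₁) 0 * (v ᵥ* Q₂) 1 - (v ᵥ* Q₁) 1 * (v ᵥ* Q₂) 0 ≠ 0) :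
    ∃ v w : Fin 2 → K, v ≠ 0 ∧ w ≠ 0 ∧
      (v ᵥ* Q₁) ⬝ᵥ w = 0 ∧ (v ᵥ* Q₂) ⬝ᵥ w = 0 ∧
      ∀ v' w' : Fin 2 → K, v' ≠ 0 → w' ≠ 0 →
        (v' ᵥ* Q₁) ⬝ᵥ w' = 0 → (v' ᵥ* Q₂) ⬝ᵥ w' = 0 →
        ((∃ a b : K, a ≠ 0 ∧ b ≠ 0 ∧ v' = a • v ∧ w' = b • w) ∨
         (∃ a b : K, a ≠ 0 ∧ b ≠ 0 ∧ v' = a • w ∧ w' = b • v)) := by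
  -- basic expansion helpers
  have hvm : ∀ (Q : Matrix (Fin 2) (Fin 2) K) (x : Fin 2 → K) (i : Fin 2),
      (x ᵥ* Q) i = x 0 * Q 0 i + x 1 * Q 1 i := by
    intro Q x i
    simp [Matrix.vecMul, dotProduct, Fin.sum_univ_two]
  have hdp : ∀ (a w : Fin 2 → K), a ⬝ᵥ w = a 0 * w 0 + a 1 * w 1 := by
    intro a w
    simp [dotProduct, Fin.sum_univ_two]
  have hexp : ∀ (Q : Matrix (Fin 2) (Fin 2) K) (x y : Fin 2 → K),
      (x ᵥ* Q) ⬝ᵥ y = (x 0 * Q 0 0 + x 1 * Q 1 0) * y 0 + (x 0 * Q 0 1 + x 1 * Q 1 1) * y 1 := by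
    intro Q x y
    rw [hdp, hvm, hvm]
  have hsymm : ∀ (Q : Matrix (Fin 2) (Fin 2) K), Q.IsSymm → ∀ x y : Fin 2 → K,
      (x ᵥ* Q) ⬝ᵥ y = (y ᵥ* Q) ⬝ᵥ x := by
    intro Q hQ x y
    have h10 := hQ.apply 0 1
    rw [hexp, hexp]
    linear_combination (x 1 * y 0 - x 0 * y 1) * h10
  have hscaleL : ∀ (Q : Matrix (Fin 2) (Fin 2) K) (t : K) (x y : Fin 2 → K),
      ((t • x) ᵥ* Q) ⬝ᵥ y = t * ((x ᵥ* Q) ⬝ᵥ y) := by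
    intro Q t x y
    rw [hexp, hexp]
    simp only [Pi.smul_apply, smul_eq_mul]
    ring
  have hscaleR : ∀ (Q : Matrix (Fin 2) (Fin 2) K) (t : K) (x y : Fin 2 → K),
      (x ᵥ* Q) ⬝ᵥ (t • y) = t * ((x ᵥ* Q) ⬝ᵥ y) := by
    intro Q t x y
    rw [hexp, hexp]
    simp only [Pi.smul_apply, smul_eq_mul]
    ring
  -- determinant vanishes on conjugate points
  have hconj_det : ∀ x y : Fin 2 → K, y ≠ 0 → (x ᵥ* Q₁) ⬝ᵥ y = 0 → (x ᵥ* Q₂) ⬝ᵥ y = 0 →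
      (x ᵥ* Q₁) 0 * (x ᵥ* Q₂) 1 - (x ᵥ* Q₁) 1 * (x ᵥ* Q₂) 0 = 0 := by
    intro x y hy e1 e2
    rw [hdp] at e1 e2
    exact aux_cross_zero hy e1 e2
  -- for nonzero x, the two covectors are not both zero
  have hnotboth : ∀ x : Fin 2 → K, x ≠ 0 → ¬((x ᵥ* Q₁) = 0 ∧ (x ᵥ* Q₂) = 0) := by
    rintro x hx ⟨z1, z2⟩
    obtain ⟨u, hu⟩ := hD
    apply hu
    apply hconj_det u x hx
    · rw [hsymm Q₁ h₁, z1]; simp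
    · rw [hsymm Q₂ h₂, z2]; simp
  -- uniqueness of the conjugate partner
  have hker : ∀ x y z : Fin 2 → K, x ≠ 0 → y ≠ 0 → z ≠ 0 →
      (x ᵥ* Q₁) ⬝ᵥ y = 0 → (x ᵥ* Q₂) ⬝ᵥ y = 0 →
      (x ᵥ* Q₁) ⬝ᵥ z = 0 → (x ᵥ* Q₂) ⬝ᵥ z = 0 →
      ∃ b : K, b ≠ 0 ∧ z = b • y := by
    intro x y z hx hy hz e1 e2 e3 e4
    obtain ⟨a, ha, hay, haz⟩ : ∃ a : Fin 2 → K, a ≠ 0 ∧ a ⬝ᵥ y = 0 ∧ a ⬝ᵥ z = 0 := by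
      by_cases hq : (x ᵥ* Q₁) = 0
      · exact ⟨x ᵥ* Q₂, fun hh => hnotboth x hx ⟨hq, hh⟩, e2, e4⟩
      · exact ⟨x ᵥ* Q₁, hq, e1, e3⟩
    apply aux_prop hy hz
    rw [hdp] at hay haz
    refine aux_cross_zero ha ?_ ?_
    · linear_combination hay
    · linear_combination haz
  -- existence of a conjugate partner for a root of D
  have hpartner : ∀ x : Fin 2 → K, x ≠ 0 →
      (x ᵥ* Q₁) 0 * (x ᵥ* Q₂) 1 - (x ᵥ* Q₁) 1 * (x ᵥ* Q₂) 0 = 0 →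
      ∃ y : Fin 2 → K, y ≠ 0 ∧ (x ᵥ* Q₁) ⬝ᵥ y = 0 ∧ (x ᵥ* Q₂) ⬝ᵥ y = 0 := by
    intro x hx hDx
    by_cases hq : (x ᵥ* Q₁) = 0
    · have hb : (x ᵥ* Q₂) ≠ 0 := fun hh => hnotboth x hx ⟨hq, hh⟩
      refine ⟨![(x ᵥ* Q₂) 1, -((x ᵥ* Q₂) 0)], ?_, ?_, ?_⟩
      · intro hh
        apply hb
        have h0 := congrFun hh 0
        have h1 := congrFun hh 1
        simp at h0 h1
        exact funext fun i => by fin_cases i <;> simp [h0, h1]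
      · rw [hq]; simp
      · rw [hdp]; simp; ring
    · refine ⟨![(x ᵥ* Q₁) 1, -((x ᵥ* Q₁) 0)], ?_, ?_, ?_⟩
      · intro hh
        apply hq
        have h0 := congrFun hh 0
        have h1 := congrFun hh 1
        simp at h0 h1
        exact funext fun i => by fin_cases i <;> simp [h0, h1]
      · rw [hdp]; simp; ring
      · rw [hdp]; simp; linear_combination -hDx
  -- factor the discriminant quadratic
  have hne : ¬((Q₁ 0 0 * Q₂ 0 1 - Q₁ 0 1 * Q₂ 0 0) = 0 ∧
      (Q₁ 0 0 * Q₂ 1 1 + Q₁ 1 0 * Q₂ 0 1 - Q₁ 0 1 * Q₂ 1 0 - Q₁ 1 1 * Q₂ 0 0) = 0 ∧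
      (Q₁ 1 0 * Q₂ 1 1 - Q₁ 1 1 * Q₂ 1 0) = 0) := by
    rintro ⟨hA, hB, hC⟩
    obtain ⟨u, hu⟩ := hD
    apply hu
    simp only [hvm]
    linear_combination (u 0 ^ 2) * hA + (u 0 * u 1) * hB + (u 1 ^ 2) * hC
  obtain ⟨p, q, r, s, cc, hpq, hrs, hcc, hfac⟩ := factor_quad
    (Q₁ 0 0 * Q₂ 0 1 - Q₁ 0 1 * Q₂ 0 0)
    (Q₁ 0 0 * Q₂ 1 1 + Q₁ 1 0 * Q₂ 0 1 - Q₁ 0 1 * Q₂ 1 0 - Q₁ 1 1 * Q₂ 0 0)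
    (Q₁ 1 0 * Q₂ 1 1 - Q₁ 1 1 * Q₂ 1 0) hne
  have hDfac : ∀ x : Fin 2 → K,
      (x ᵥ* Q₁) 0 * (x ᵥ* Q₂) 1 - (x ᵥ* Q₁) 1 * (x ᵥ* Q₂) 0
        = cc * (q * x 0 - p * x 1) * (s * x 0 - r * x 1) := by
    intro x
    rw [← hfac (x 0) (x 1)]
    simp only [hvm]
    ring
  set P : Fin 2 → K := ![p, q] with hPdef
  set R : Fin 2 → K := ![r, s] with hRdef
  have hP0 : P 0 = p := rfl
  have hP1 : P 1 = q := rfl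
  have hR0 : R 0 = r := rfl
  have hR1 : R 1 = s := rfl
  have hPne : P ≠ 0 := by
    intro hh
    apply hpq
    constructor
    · have := congrFun hh 0; simpa [hP0] using this
    · have := congrFun hh 1; simpa [hP1] using this
  have hRne : R ≠ 0 := by
    intro hh
    apply hrs
    constructor
    · have := congrFun hh 0; simpa [hR0] using this
    · have := congrFun hh 1; simpa [hR1] using this
  have hDP : (P ᵥ* Q₁) 0 * (P ᵥ* Q₂) 1 - (P ᵥ* Q₁) 1 * (P ᵥ* Q₂) 0 = 0 := by
    rw [hDfac, hP0, hP1]; ring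
  have hDR : (R ᵥ* Q₁) 0 * (R ᵥ* Q₂) 1 - (R ᵥ* Q₁) 1 * (R ᵥ* Q₂) 0 = 0 := by
    rw [hDfac, hR0, hR1]; ring
  -- root characterization
  have hroot : ∀ x : Fin 2 → K, x ≠ 0 →
      (x ᵥ* Q₁) 0 * (x ᵥ* Q₂) 1 - (x ᵥ* Q₁) 1 * (x ᵥ* Q₂) 0 = 0 →
      (∃ a : K, a ≠ 0 ∧ x = a • P) ∨ (∃ a : K, a ≠ 0 ∧ x = a • R) := by
    intro x hx hDx
    rw [hDfac] at hDx
    rcases mul_eq_zero.mp hDx with h | h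
    · rcases mul_eq_zero.mp h with h' | h'
      · exact absurd h' hcc
      · left
        apply aux_prop hPne hx
        rw [hP0, hP1]
        linear_combination -h'
    · right
      apply aux_prop hRne hx
      rw [hR0, hR1]
      linear_combination -h
  -- construct the pair
  obtain ⟨w, hwne, hw1, hw2⟩ := hpartner P hPne hDP
  have hDw : (w ᵥ* Q₁) 0 * (w ᵥ* Q₂) 1 - (w ᵥ* Q₁) 1 * (w ᵥ* Q₂) 0 = 0 := by
    apply hconj_det w P hPne
    · rw [hsymm Q₁ h₁]; exact hw1
    · rw [hsymm Q₂ h₂]; exact hw2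
  refine ⟨P, w, hPne, hwne, hw1, hw2, ?_⟩
  intro v' w' hv' hw' e1 e2
  have hDv' := hconj_det v' w' hw' e1 e2
  have hDw' : (w' ᵥ* Q₁) 0 * (w' ᵥ* Q₂) 1 - (w' ᵥ* Q₁) 1 * (w' ᵥ* Q₂) 0 = 0 := by
    apply hconj_det w' v' hv'
    · rw [hsymm Q₁ h₁]; exact e1
    · rw [hsymm Q₂ h₂]; exact e2
  by_cases hd : p * s - q * r = 0
  · -- double root case : everything is proportional to P
    obtain ⟨μ, hμ, hRP⟩ : ∃ a : K, a ≠ 0 ∧ R = a • P := by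
      apply aux_prop hPne hRne
      rw [hP0, hP1, hR0, hR1]
      linear_combination hd
    have hrootP : ∀ x : Fin 2 → K, x ≠ 0 →
        (x ᵥ* Q₁) 0 * (x ᵥ* Q₂) 1 - (x ᵥ* Q₁) 1 * (x ᵥ* Q₂) 0 = 0 →
        ∃ a : K, a ≠ 0 ∧ x = a • P := by
      intro x hx hDx
      rcases hroot x hx hDx with h | ⟨a, ha, hxa⟩
      · exact h
      · exact ⟨a * μ, mul_ne_zero ha hμ, by rw [hxa, hRP, smul_smul]⟩
    obtain ⟨a, ha, hva⟩ := hrootP v' hv' hDv'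
    obtain ⟨e, he, hwe⟩ := hrootP w' hw' hDw'
    obtain ⟨f, hf, hwf⟩ := hrootP w hwne hDw
    left
    refine ⟨a, e / f, ha, div_ne_zero he hf, hva, ?_⟩
    rw [hwe, hwf, smul_smul]
    congr 1
    field_simp
  · -- two distinct roots; first show w is proportional to R
    obtain ⟨l, hl, hwR⟩ : ∃ l : K, l ≠ 0 ∧ w = l • R := by
      rcases hroot w hwne hDw with ⟨l, hl, hwl⟩ | h
      · exfalso
        -- then P is self-conjugate
        have hPP1 : (P ᵥ* Q₁) ⬝ᵥ P = 0 := by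
          have h' := hw1
          rw [hwl, hsymm Q₁ h₁, hscaleL] at h'
          exact (mul_eq_zero.mp h').resolve_left hl
        have hPP2 : (P ᵥ* Q₂) ⬝ᵥ P = 0 := by
          have h' := hw2
          rw [hwl, hsymm Q₂ h₂, hscaleL] at h'
          exact (mul_eq_zero.mp h').resolve_left hl
        -- partner of R
        obtain ⟨u, hu, hu1, hu2⟩ := hpartner R hRne hDR
        have hDu : (u ᵥ* Q₁) 0 * (u ᵥ* Q₂) 1 - (u ᵥ* Q₁) 1 * (u ᵥ* Q₂) 0 = 0 := by
          apply hconj_det u R hRne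
          · rw [hsymm Q₁ h₁]; exact hu1
          · rw [hsymm Q₂ h₂]; exact hu2
        rcases hroot u hu hDu with ⟨e, he, hue⟩ | ⟨e, he, hue⟩
        · -- conj R P , so R is in the kernel at P, hence R ∥ P : contradiction
          have hPR1 : (P ᵥ* Q₁) ⬝ᵥ R = 0 := by
            rw [hsymm Q₁ h₁]
            have h' := hu1
            rw [hue, hsymm Q₁ h₁, hscaleL, hsymm Q₁ h₁] at h'
            exact (mul_eq_zero.mp h').resolve_left he
          have hPR2 : (P ᵥ* Q₂) ⬝ᵥ R = 0 := by
            rw [hsymm Q₂ h₂]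
            have h' := hu2
            rw [hue, hsymm Q₂ h₂, hscaleL, hsymm Q₂ h₂] at h'
            exact (mul_eq_zero.mp h').resolve_left he
          obtain ⟨b, hb, hRb⟩ := hker P P R hPne hPne hRne hPP1 hPP2 hPR1 hPR2
          apply hd
          have hr' : r = b * p := by
            have := congrFun hRb 0; simpa [hR0, hP0] using this
          have hs' : s = b * q := by
            have := congrFun hRb 1; simpa [hR1, hP1] using this
          rw [hr', hs']; ring
        · -- R is self-conjugate too : contradiction with linear independence
          have hRR1 : (R ᵥ* Q₁) ⬝ᵥ R = 0 := by
            have h' := hu1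
            rw [hue, hsymm Q₁ h₁, hscaleL] at h'
            exact (mul_eq_zero.mp h').resolve_left he
          have hRR2 : (R ᵥ* Q₂) ⬝ᵥ R = 0 := by
            have h' := hu2
            rw [hue, hsymm Q₂ h₂, hscaleL] at h'
            exact (mul_eq_zero.mp h').resolve_left he
          have hq1 : Q₁ 1 0 = Q₁ 0 1 := h₁.apply 0 1
          have hq2 : Q₂ 1 0 = Q₂ 0 1 := h₂.apply 0 1
          have hd2 : (p * s - q * r) ^ 2 ≠ 0 := pow_ne_zero 2 hd
          have EPP1 := hPP1
          rw [hexp, hP0, hP1, hq1] at EPP1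
          have EPP2 := hPP2
          rw [hexp, hP0, hP1, hq2] at EPP2
          have ERR1 := hRR1
          rw [hexp, hR0, hR1, hq1] at ERR1
          have ERR2 := hRR2
          rw [hexp, hR0, hR1, hq2] at ERR2
          by_cases hc1 : ((p * Q₁ 0 0 + q * Q₁ 0 1) * r + (p * Q₁ 0 1 + q * Q₁ 1 1) * s) = 0
          · have hQ1 : Q₁ = 0 := by
              ext i j
              fin_cases i <;> fin_cases j <;> simp only [Matrix.zero_apply]
              · have h' : (p * s - q * r) ^ 2 * Q₁ 0 0 = 0 := by
                  linear_combination (s ^ 2) * EPP1 - (2 * s * q) * hc1 + (q ^ 2) * ERR1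
                exact (mul_eq_zero.mp h').resolve_left hd2
              · have h' : (p * s - q * r) ^ 2 * Q₁ 0 1 = 0 := by
                  linear_combination (-(s * r)) * EPP1 + (s * p + q * r) * hc1 + (-(q * p)) * ERR1
                exact (mul_eq_zero.mp h').resolve_left hd2
              · have h' : (p * s - q * r) ^ 2 * Q₁ 1 0 = 0 := by
                  rw [hq1]
                  linear_combination (-(s * r)) * EPP1 + (s * p + q * r) * hc1 + (-(q * p)) * ERR1
                exact (mul_eq_zero.mp h').resolve_left hd2
              · have h' : (p * s - q * r) ^ 2 * Q₁ 1 1 = 0 := by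
                  linear_combination (r ^ 2) * EPP1 - (2 * r * p) * hc1 + (p ^ 2) * ERR1
                exact (mul_eq_zero.mp h').resolve_left hd2
            exact hind.ne_zero 0 (by simp [hQ1])
          · have e00 : ((p * Q₂ 0 0 + q * Q₂ 0 1) * r + (p * Q₂ 0 1 + q * Q₂ 1 1) * s) * Q₁ 0 0 = ((p * Q₁ 0 0 + q * Q₁ 0 1) * r + (p * Q₁ 0 1 + q * Q₁ 1 1) * s) * Q₂ 0 0 := by
              have h' : (p * s - q * r) ^ 2 * (((p * Q₂ 0 0 + q * Q₂ 0 1) * r + (p * Q₂ 0 1 + q * Q₂ 1 1) * s) * Q₁ 0 0 - ((p * Q₁ 0 0 + q * Q₁ 0 1) * r + (p * Q₁ 0 1 + q * Q₁ 1 1) * s) * Q₂ 0 0) = 0 := by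
                linear_combination (s ^ 2 * ((p * Q₂ 0 0 + q * Q₂ 0 1) * r + (p * Q₂ 0 1 + q * Q₂ 1 1) * s)) * EPP1 - (s ^ 2 * ((p * Q₁ 0 0 + q * Q₁ 0 1) * r + (p * Q₁ 0 1 + q * Q₁ 1 1) * s)) * EPP2 + (q ^ 2 * ((p * Q₂ 0 0 + q * Q₂ 0 1) * r + (p * Q₂ 0 1 + q * Q₂ 1 1) * s)) * ERR1 - (q ^ 2 * ((p * Q₁ 0 0 + q * Q₁ 0 1) * r + (p * Q₁ 0 1 + q * Q₁ 1 1) * s)) * ERR2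
              exact sub_eq_zero.mp ((mul_eq_zero.mp h').resolve_left hd2)
            have e01 : ((p * Q₂ 0 0 + q * Q₂ 0 1) * r + (p * Q₂ 0 1 + q * Q₂ 1 1) * s) * Q₁ 0 1 = ((p * Q₁ 0 0 + q * Q₁ 0 1) * r + (p * Q₁ 0 1 + q * Q₁ 1 1) * s) * Q₂ 0 1 := by
              have h' : (p * s - q * r) ^ 2 * (((p * Q₂ 0 0 + q * Q₂ 0 1) * r + (p * Q₂ 0 1 + q * Q₂ 1 1) * s) * Q₁ 0 1 - ((p * Q₁ 0 0 + q * Q₁ 0 1) * r + (p * Q₁ 0 1 + q * Q₁ 1 1) * s) * Q₂ 0 1) = 0 := by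
                linear_combination (-(s * r) * ((p * Q₂ 0 0 + q * Q₂ 0 1) * r + (p * Q₂ 0 1 + q * Q₂ 1 1) * s)) * EPP1 + (s * r * ((p * Q₁ 0 0 + q * Q₁ 0 1) * r + (p * Q₁ 0 1 + q * Q₁ 1 1) * s)) * EPP2 - (q * p * ((p * Q₂ 0 0 + q * Q₂ 0 1) * r + (p * Q₂ 0 1 + q * Q₂ 1 1) * s)) * ERR1 + (q * p * ((p * Q₁ 0 0 + q * Q₁ 0 1) * r + (p * Q₁ 0 1 + q * Q₁ 1 1) * s)) * ERR2
              exact sub_eq_zero.mp ((mul_eq_zero.mp h').resolve_left hd2)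
            have e11 : ((p * Q₂ 0 0 + q * Q₂ 0 1) * r + (p * Q₂ 0 1 + q * Q₂ 1 1) * s) * Q₁ 1 1 = ((p * Q₁ 0 0 + q * Q₁ 0 1) * r + (p * Q₁ 0 1 + q * Q₁ 1 1) * s) * Q₂ 1 1 := by
              have h' : (p * s - q * r) ^ 2 * (((p * Q₂ 0 0 + q * Q₂ 0 1) * r + (p * Q₂ 0 1 + q * Q₂ 1 1) * s) * Q₁ 1 1 - ((p * Q₁ 0 0 + q * Q₁ 0 1) * r + (p * Q₁ 0 1 + q * Q₁ 1 1) * s) * Q₂ 1 1) = 0 := by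
                linear_combination (r ^ 2 * ((p * Q₂ 0 0 + q * Q₂ 0 1) * r + (p * Q₂ 0 1 + q * Q₂ 1 1) * s)) * EPP1 - (r ^ 2 * ((p * Q₁ 0 0 + q * Q₁ 0 1) * r + (p * Q₁ 0 1 + q * Q₁ 1 1) * s)) * EPP2 + (p ^ 2 * ((p * Q₂ 0 0 + q * Q₂ 0 1) * r + (p * Q₂ 0 1 + q * Q₂ 1 1) * s)) * ERR1 - (p ^ 2 * ((p * Q₁ 0 0 + q * Q₁ 0 1) * r + (p * Q₁ 0 1 + q * Q₁ 1 1) * s)) * ERR2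
              exact sub_eq_zero.mp ((mul_eq_zero.mp h').resolve_left hd2)
            by_cases hc2 : ((p * Q₂ 0 0 + q * Q₂ 0 1) * r + (p * Q₂ 0 1 + q * Q₂ 1 1) * s) = 0
            · have hQ2 : Q₂ = 0 := by
                ext i j
                fin_cases i <;> fin_cases j <;> simp only [Matrix.zero_apply]
                · have h' : ((p * Q₁ 0 0 + q * Q₁ 0 1) * r + (p * Q₁ 0 1 + q * Q₁ 1 1) * s) * Q₂ 0 0 = 0 := by rw [← e00, hc2, zero_mul]
                  exact (mul_eq_zero.mp h').resolve_left hc1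
                · have h' : ((p * Q₁ 0 0 + q * Q₁ 0 1) * r + (p * Q₁ 0 1 + q * Q₁ 1 1) * s) * Q₂ 0 1 = 0 := by rw [← e01, hc2, zero_mul]
                  exact (mul_eq_zero.mp h').resolve_left hc1
                · have h' : ((p * Q₁ 0 0 + q * Q₁ 0 1) * r + (p * Q₁ 0 1 + q * Q₁ 1 1) * s) * Q₂ 1 0 = 0 := by
                    rw [hq2, ← e01, hc2, zero_mul]
                  exact (mul_eq_zero.mp h').resolve_left hc1
                · have h' : ((p * Q₁ 0 0 + q * Q₁ 0 1) * r + (p * Q₁ 0 1 + q * Q₁ 1 1) * s) * Q₂ 1 1 = 0 := by rw [← e11, hc2, zero_mul]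
                  exact (mul_eq_zero.mp h').resolve_left hc1
              exact hind.ne_zero 1 (by simp [hQ2])
            · have hgoal := (linearIndependent_fin2.mp hind).2 (((p * Q₁ 0 0 + q * Q₁ 0 1) * r + (p * Q₁ 0 1 + q * Q₁ 1 1) * s) / ((p * Q₂ 0 0 + q * Q₂ 0 1) * r + (p * Q₂ 0 1 + q * Q₂ 1 1) * s))
              simp only [Matrix.cons_val_one, Matrix.head_cons, Matrix.cons_val_zero] at hgoal
              apply hgoal
              ext i j
              fin_cases i <;> fin_cases j <;> simp only [Matrix.smul_apply, smul_eq_mul]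
              · simp only [Fin.zero_eta, Fin.mk_one]
                rw [div_mul_eq_mul_div, div_eq_iff hc2]
                linear_combination -e00
              · simp only [Fin.zero_eta, Fin.mk_one]
                rw [div_mul_eq_mul_div, div_eq_iff hc2]
                linear_combination -e01
              · have h' : ((p * Q₁ 0 0 + q * Q₁ 0 1) * r + (p * Q₁ 0 1 + q * Q₁ 1 1) * s) / ((p * Q₂ 0 0 + q * Q₂ 0 1) * r + (p * Q₂ 0 1 + q * Q₂ 1 1) * s) * Q₂ 1 0 = Q₁ 1 0 := by
                  rw [hq1, hq2]
                  rw [div_mul_eq_mul_div, div_eq_iff hc2]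
                  linear_combination -e01
                exact h'
              · simp only [Fin.zero_eta, Fin.mk_one]
                rw [div_mul_eq_mul_div, div_eq_iff hc2]
                linear_combination -e11
      · exact h
    rcases hroot v' hv' hDv' with ⟨a, ha, hva⟩ | ⟨a, ha, hva⟩
    · -- v' ∥ P
      have hPw'1 : (P ᵥ* Q₁) ⬝ᵥ w' = 0 := by
        have h' := e1
        rw [hva, hscaleL] at h'
        exact (mul_eq_zero.mp h').resolve_left ha
      have hPw'2 : (P ᵥ* Q₂) ⬝ᵥ w' = 0 := by
        have h' := e2
        rw [hva, hscaleL] at h'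
        exact (mul_eq_zero.mp h').resolve_left ha
      obtain ⟨b, hb, hw'b⟩ := hker P w w' hPne hwne hw' hw1 hw2 hPw'1 hPw'2
      exact Or.inl ⟨a, b, ha, hb, hva, hw'b⟩
    · -- v' ∥ R
      have hRw'1 : (R ᵥ* Q₁) ⬝ᵥ w' = 0 := by
        have h' := e1
        rw [hva, hscaleL] at h'
        exact (mul_eq_zero.mp h').resolve_left ha
      have hRw'2 : (R ᵥ* Q₂) ⬝ᵥ w' = 0 := by
        have h' := e2
        rw [hva, hscaleL] at h'
        exact (mul_eq_zero.mp h').resolve_left ha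
      have hRP1 : (R ᵥ* Q₁) ⬝ᵥ P = 0 := by
        rw [hsymm Q₁ h₁]
        have h' := hw1
        rw [hwR, hscaleR] at h'
        exact (mul_eq_zero.mp h').resolve_left hl
      have hRP2 : (R ᵥ* Q₂) ⬝ᵥ P = 0 := by
        rw [hsymm Q₂ h₂]
        have h' := hw2
        rw [hwR, hscaleR] at h'
        exact (mul_eq_zero.mp h').resolve_left hl
      obtain ⟨b, hb, hw'b⟩ := hker R P w' hRne hPne hw' hRP1 hRP2 hRw'1 hRw'2
      refine Or.inr ⟨a / l, b, div_ne_zero ha hl, hb, ?_, hw'b⟩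
      rw [hva, hwR, smul_smul]
      congr 1
      field_simp
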